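/- Let m₁ and m_P be positive integers (or m_P > 0 real), λ > 0, Ψ > 0, C > 0, z > 0, α₂ > 0, μ₂ > 0 and Ῡ > 0. Let γ₁, P and Υ be mutually independent random variables, where γ₁ has the Gamma(m₁, λ) density, P has the Gamma(m_P, Ψ) density with density f_P, and Υ has the α-μ density with parameters (α₂, μ₂, Ῡ), with density f_Υ. Then, with γ₂ = P·Υ, P( γ₁γ₂/(γ₂ + C) ≤ z ) = 1 − e^{−λz} · Σ_{n=0}^{m₁−1} (1/n!) Σ_{p=0}^{n} C(n,p) (λz)^{n−p} (λCz)^{p} ∫_0^∞ ∫_0^∞ (t u)^{−p} e^{−λCz/(t u)} f_P(t) f_Υ(u) dt du, where C(n,p) denotes the binomial coefficient. -/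

import Mathlib

open MeasureTheory ProbabilityTheory Finset

/-! ### Auxiliary lemmas -/

lemma gamma_deriv (l : ℝ) (k : ℕ) (x : ℝ) :
    HasDerivAt (fun y => -(Real.exp (-l * y) * ∑ n ∈ range (k+1), (l*y)^n / n.factorial))
      (l^(k+1) * x^k * Real.exp (-l * x) / (k.factorial : ℝ)) x := by
  have hexp : HasDerivAt (fun y : ℝ => Real.exp (-l * y)) (Real.exp (-l * x) * (-l)) x :=
    by simpa using ((hasDerivAt_id x).const_mul (-l)).exp
  have hterm : ∀ n : ℕ, HasDerivAt (fun y : ℝ => (l*y)^n / n.factorial)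
      ((n * (l*x)^(n-1) * l) / n.factorial) x := by
    intro n
    simpa using (((hasDerivAt_id x).const_mul l).pow n).div_const (n.factorial : ℝ)
  have hS : HasDerivAt (fun y : ℝ => ∑ n ∈ range (k+1), (l*y)^n / n.factorial)
      (l * ∑ n ∈ range k, (l*x)^n / n.factorial) x := by
    have := HasDerivAt.fun_sum (fun n _ => hterm n) (u := range (k+1))
    convert this using 1
    · rfl
    · rfl
    rw [Finset.sum_range_succ']
    simp only [Nat.cast_zero, zero_mul, pow_zero, Nat.factorial_zero, Nat.cast_one, zero_div,
      add_zero, Finset.mul_sum]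
    refine Finset.sum_congr rfl fun i _ => ?_
    have h1 : ((i+1).factorial : ℝ) = (i+1) * i.factorial := by
      rw [Nat.factorial_succ]; push_cast; ring
    rw [h1]
    have hi : ((i : ℝ) + 1) ≠ 0 := by positivity
    field_simp
    simp only [Nat.add_sub_cancel, Nat.add_sub_cancel_left, Nat.cast_add, Nat.cast_one]
    ring
  have := (hexp.mul hS).neg
  convert this using 1
  · rfl
  · rfl
  · rfl
  rw [Finset.sum_range_succ]
  have : ((l*x)^k : ℝ) = l^k * x^k := mul_pow l x k
  field_simp
  ring

lemma gamma_cdf_int (l : ℝ) (k : ℕ) (a : ℝ) (ha : 0 ≤ a) :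
    ∫ x in Set.Ioc 0 a, l^(k+1) * x^k * Real.exp (-l * x) / (k.factorial : ℝ)
      = 1 - Real.exp (-l * a) * ∑ n ∈ range (k+1), (l*a)^n / n.factorial := by
  have hcont : Continuous fun x : ℝ => l^(k+1) * x^k * Real.exp (-l * x) / (k.factorial : ℝ) := by
    continuity
  have h := intervalIntegral.integral_eq_sub_of_hasDerivAt
    (f := fun y => -(Real.exp (-l * y) * ∑ n ∈ range (k+1), (l*y)^n / n.factorial))
    (fun x _ => gamma_deriv l k x) (hcont.intervalIntegrable 0 a)
  rw [intervalIntegral.integral_of_le ha] at h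
  rw [h]
  have h0 : ∑ n ∈ range (k+1), (l*(0:ℝ))^n / n.factorial = 1 := by
    rw [Finset.sum_eq_single 0]
    · simp
    · intro b _ hb; simp [zero_pow hb]
    · intro h; simp at h
  rw [h0]
  simp
  ring

lemma gamma_cdf_nonneg (l : ℝ) (hl : 0 < l) (k : ℕ) (a : ℝ) (ha : 0 ≤ a) :
    0 ≤ 1 - Real.exp (-l * a) * ∑ n ∈ range (k+1), (l*a)^n / n.factorial := by
  rw [← gamma_cdf_int l k a ha]
  apply setIntegral_nonneg measurableSet_Ioc
  intro x hx
  have hx0 : 0 < x := hx.1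
  positivity

lemma gamma_cdf_le_one (l : ℝ) (hl : 0 < l) (k : ℕ) (a : ℝ) (ha : 0 ≤ a) :
    1 - Real.exp (-l * a) * ∑ n ∈ range (k+1), (l*a)^n / n.factorial ≤ 1 := by
  have h1 : 0 ≤ ∑ n ∈ range (k+1), (l*a)^n / n.factorial := by
    apply Finset.sum_nonneg
    intro n _
    have : 0 ≤ l * a := by positivity
    positivity
  nlinarith [Real.exp_pos (-l * a), Real.exp_nonneg (-l * a)]

lemma gamma_measure_Iic (l : ℝ) (hl : 0 < l) (m : ℕ) (hm : 0 < m) (a : ℝ) (ha : 0 ≤ a) :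
    (volume.withDensity fun x => ENNReal.ofReal
        (if 0 < x then l ^ m * x ^ (m-1) * Real.exp (-l * x) / Real.Gamma (m : ℝ) else 0))
      (Set.Iic a)
    = ENNReal.ofReal (1 - Real.exp (-l * a) * ∑ n ∈ range m, (l*a)^n / n.factorial) := by
  obtain ⟨k, rfl⟩ : ∃ k, m = k + 1 := ⟨m - 1, (Nat.succ_pred_eq_of_pos hm).symm⟩
  have hΓ : Real.Gamma ((k+1 : ℕ) : ℝ) = (k.factorial : ℝ) := by
    push_cast
    exact_mod_cast Real.Gamma_nat_eq_factorial k
  rw [withDensity_apply _ measurableSet_Iic]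
  have hsplit : Set.Iic a = Set.Iic 0 ∪ Set.Ioc 0 a := (Set.Iic_union_Ioc_eq_Iic ha).symm
  rw [hsplit, lintegral_union measurableSet_Ioc (Set.Iic_disjoint_Ioc le_rfl)]
  have h1 : ∫⁻ x in Set.Iic 0, ENNReal.ofReal
      (if 0 < x then l ^ (k+1) * x ^ (k+1-1) * Real.exp (-l * x) / Real.Gamma ((k+1 : ℕ) : ℝ)
       else 0) = 0 := by
    rw [setLIntegral_congr_fun measurableSet_Iic
      (fun x (hx : x ∈ Set.Iic 0) => by
        rw [if_neg (not_lt.mpr hx)] : ∀ x ∈ Set.Iic 0, ENNReal.ofReal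
          (if 0 < x then l ^ (k+1) * x ^ (k+1-1) * Real.exp (-l * x)
            / Real.Gamma ((k+1 : ℕ) : ℝ) else 0) = ENNReal.ofReal 0)]
    simp
  rw [h1, zero_add]
  have h2 : ∫⁻ x in Set.Ioc 0 a, ENNReal.ofReal
      (if 0 < x then l ^ (k+1) * x ^ (k+1-1) * Real.exp (-l * x) / Real.Gamma ((k+1 : ℕ) : ℝ)
       else 0)
      = ∫⁻ x in Set.Ioc 0 a, ENNReal.ofReal
        (l ^ (k+1) * x ^ k * Real.exp (-l * x) / (k.factorial : ℝ)) := by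
    apply setLIntegral_congr_fun measurableSet_Ioc
    intro x hx
    dsimp only
    rw [if_pos hx.1, hΓ, Nat.add_sub_cancel]
  rw [h2, ← MeasureTheory.ofReal_integral_eq_lintegral_ofReal]
  · rw [gamma_cdf_int l k a ha]
  · apply Continuous.integrableOn_Ioc
    continuity
  · filter_upwards [ae_restrict_mem measurableSet_Ioc] with x hx
    have hx0 : 0 < x := hx.1
    positivity

lemma kbound (c : ℝ) (hc : 0 < c) (p : ℕ) (x : ℝ) (hx : 0 < x) :
    x ^ (-(p:ℝ)) * Real.exp (-c / x) ≤ (p.factorial : ℝ) / c ^ p := by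
  have hy : (0:ℝ) ≤ c / x := by positivity
  have h1 : (c/x)^p / (p.factorial : ℝ) ≤ Real.exp (c/x) := by
    calc (c/x)^p / (p.factorial : ℝ)
        ≤ ∑ i ∈ range (p+1), (c/x)^i / (i.factorial : ℝ) := by
          apply Finset.single_le_sum (f := fun i => (c/x)^i / (i.factorial : ℝ))
            (fun i _ => by positivity) (self_mem_range_succ p)
      _ ≤ Real.exp (c/x) := Real.sum_le_exp_of_nonneg hy _
  rw [Real.rpow_neg hx.le, Real.rpow_natCast, neg_div, Real.exp_neg]
  have hxp : (0:ℝ) < x ^ p := by positivity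
  have hcp : (0:ℝ) < c ^ p := by positivity
  have hfp : (0:ℝ) < (p.factorial : ℝ) := by positivity
  have h2 : (Real.exp (c/x))⁻¹ ≤ ((c/x)^p / (p.factorial : ℝ))⁻¹ := by
    have hp0 : (0:ℝ) < (c/x)^p / (p.factorial : ℝ) := by positivity
    exact inv_anti₀ hp0 h1
  calc (x^p)⁻¹ * (Real.exp (c/x))⁻¹ ≤ (x^p)⁻¹ * ((c/x)^p / (p.factorial : ℝ))⁻¹ := by
        apply mul_le_mul_of_nonneg_left h2 (by positivity)
    _ = (p.factorial : ℝ) / c^p := by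
        rw [div_pow]
        field_simp

lemma expand_pt (lam C z : ℝ) (hlam : 0 < lam) (hC : 0 < C) (hz : 0 < z) (m : ℕ)
    (x : ℝ) (hx : 0 < x) :
    Real.exp (-lam * (z + C*z/x)) * ∑ n ∈ range m, (lam*(z + C*z/x))^n / n.factorial
    = Real.exp (-lam*z) * ∑ n ∈ range m, (1/(n.factorial:ℝ)) *
        ∑ p ∈ range (n+1), (n.choose p : ℝ) * (lam*z)^(n-p) * (lam*C*z)^p *
          (x ^ (-(p:ℝ)) * Real.exp (-(lam*C*z)/x)) := by
  have hxne : x ≠ 0 := ne_of_gt hx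
  have hexp : Real.exp (-lam * (z + C*z/x))
      = Real.exp (-lam*z) * Real.exp (-(lam*C*z)/x) := by
    rw [← Real.exp_add]
    congr 1
    field_simp
    ring
  rw [hexp, mul_assoc]
  congr 1
  rw [Finset.mul_sum]
  refine Finset.sum_congr rfl fun n _ => ?_
  have hbase : lam*(z + C*z/x) = (lam*C*z)*x⁻¹ + lam*z := by field_simp; ring
  rw [hbase, add_pow, Finset.sum_div, Finset.mul_sum, Finset.mul_sum]
  refine Finset.sum_congr rfl fun p hp => ?_
  have hxp : x ^ (-(p:ℝ)) = (x⁻¹)^p := by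
    rw [Real.rpow_neg hx.le, Real.rpow_natCast, inv_pow]
  rw [hxp, mul_pow]
  ring

lemma integral_withDensity_ofReal (f : ℝ → ℝ) (hfm : Measurable f) (hf0 : ∀ t, 0 ≤ f t)
    (hfz : ∀ t ∉ Set.Ioi (0:ℝ), f t = 0) (g : ℝ → ℝ) :
    ∫ t, g t ∂(volume.withDensity fun t => ENNReal.ofReal (f t))
      = ∫ t in Set.Ioi (0:ℝ), g t * f t := by
  have heq : (fun t => ENNReal.ofReal (f t)) = (fun t => ((f t).toNNReal : ENNReal)) := rfl
  rw [heq]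
  rw [integral_withDensity_eq_integral_smul (f := fun t => (f t).toNNReal)
    (measurable_real_toNNReal.comp hfm) g]
  have heq2 : ∀ t, (f t).toNNReal • g t = g t * f t := by
    intro t
    rw [NNReal.smul_def, smul_eq_mul, Real.coe_toNNReal _ (hf0 t), mul_comm]
  simp_rw [heq2]
  rw [setIntegral_eq_integral_of_forall_compl_eq_zero (fun t ht => by rw [hfz t ht, mul_zero])]
theorem cdf_end_to_end_harvested_case {Θ : Type*} [MeasureSpace Θ]
    [IsProbabilityMeasure (ℙ : Measure Θ)]
    (m₁ : ℕ) (hm₁ : 0 < m₁) (mP lam Ψ C z α₂ μ₂ Υb : ℝ)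
    (hmP : 0 < mP) (hlam : 0 < lam) (hΨ : 0 < Ψ) (hC : 0 < C) (hz : 0 < z)
    (hα₂ : 0 < α₂) (hμ₂ : 0 < μ₂) (hΥb : 0 < Υb)
    (γ₁ P Υ : Θ → ℝ) (hγ₁m : Measurable γ₁) (hPm : Measurable P) (hΥm : Measurable Υ)
    (hindep : iIndepFun ![γ₁, P, Υ] ℙ)
    (hγ₁ : Measure.map γ₁ ℙ = volume.withDensity fun x => ENNReal.ofReal
      (if 0 < x then lam ^ m₁ * x ^ (m₁ - 1) * Real.exp (-lam * x) / Real.Gamma (m₁ : ℝ)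
       else 0))
    (fP : ℝ → ℝ)
    (hfP : ∀ t : ℝ, fP t = if 0 < t then
        Ψ ^ mP * t ^ (mP - 1) * Real.exp (-Ψ * t) / Real.Gamma mP else 0)
    (hP : Measure.map P ℙ = volume.withDensity fun t => ENNReal.ofReal (fP t))
    (fΥ : ℝ → ℝ)
    (hfΥ : ∀ u : ℝ, fΥ u = if 0 < u then
        α₂ * μ₂ ^ μ₂ / (2 * Real.Gamma μ₂ * Υb) * (u / Υb) ^ (α₂ * μ₂ / 2 - 1)
          * Real.exp (-μ₂ * (u / Υb) ^ (α₂ / 2)) else 0)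
    (hΥ : Measure.map Υ ℙ = volume.withDensity fun u => ENNReal.ofReal (fΥ u)) :
    (ℙ {ω | γ₁ ω * (P ω * Υ ω) / (P ω * Υ ω + C) ≤ z}).toReal
      = 1 - Real.exp (-lam * z) * ∑ n ∈ Finset.range m₁, (1 / (n.factorial : ℝ)) *
          ∑ p ∈ Finset.range (n + 1),
            (n.choose p : ℝ) * (lam * z) ^ (n - p) * (lam * C * z) ^ p *
              ∫ u in Set.Ioi (0 : ℝ), ∫ t in Set.Ioi (0 : ℝ),
                (t * u) ^ (-(p : ℝ)) * Real.exp (-(lam * C * z) / (t * u)) * fP t * fΥ u := by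
  have hΓμ : 0 < Real.Gamma μ₂ := Real.Gamma_pos_of_pos hμ₂
  have hΓP : 0 < Real.Gamma mP := Real.Gamma_pos_of_pos hmP
  -- density facts
  have hfPm : Measurable fP := by
    have h : fP = fun t => if 0 < t then
        Ψ ^ mP * t ^ (mP - 1) * Real.exp (-Ψ * t) / Real.Gamma mP else 0 := funext hfP
    rw [h]
    exact Measurable.ite (measurableSet_lt measurable_const measurable_id)
      (by fun_prop) measurable_const
  have hfΥm : Measurable fΥ := by
    have h : fΥ = fun u => if 0 < u then
        α₂ * μ₂ ^ μ₂ / (2 * Real.Gamma μ₂ * Υb) * (u / Υb) ^ (α₂ * μ₂ / 2 - 1)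
          * Real.exp (-μ₂ * (u / Υb) ^ (α₂ / 2)) else 0 := funext hfΥ
    rw [h]
    exact Measurable.ite (measurableSet_lt measurable_const measurable_id)
      (by fun_prop) measurable_const
  have hfP0 : ∀ t, 0 ≤ fP t := by
    intro t
    rw [hfP]
    split_ifs with h
    · have h1 : (0:ℝ) < Ψ ^ mP := Real.rpow_pos_of_pos hΨ mP
      have h2 : (0:ℝ) ≤ t ^ (mP - 1) := Real.rpow_nonneg h.le _
      positivity
    · exact le_refl 0
  have hfΥ0 : ∀ u, 0 ≤ fΥ u := by
    intro u
    rw [hfΥ]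
    split_ifs with h
    · have h0 : 0 < u / Υb := by positivity
      have h1 : (0:ℝ) < μ₂ ^ μ₂ := Real.rpow_pos_of_pos hμ₂ μ₂
      have h2 : (0:ℝ) ≤ (u / Υb) ^ (α₂ * μ₂ / 2 - 1) := Real.rpow_nonneg h0.le _
      positivity
    · exact le_refl 0
  have hfPz : ∀ t ∉ Set.Ioi (0:ℝ), fP t = 0 := by
    intro t ht
    rw [hfP, if_neg (by simpa using ht)]
  have hfΥz : ∀ u ∉ Set.Ioi (0:ℝ), fΥ u = 0 := by
    intro u hu
    rw [hfΥ, if_neg (by simpa using hu)]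
  -- measures
  set ν₁ := Measure.map γ₁ ℙ with hν₁def
  set ν₂ := Measure.map P ℙ with hν₂def
  set ν₃ := Measure.map Υ ℙ with hν₃def
  haveI : IsProbabilityMeasure ν₁ := Measure.isProbabilityMeasure_map hγ₁m.aemeasurable
  haveI : IsProbabilityMeasure ν₂ := Measure.isProbabilityMeasure_map hPm.aemeasurable
  haveI : IsProbabilityMeasure ν₃ := Measure.isProbabilityMeasure_map hΥm.aemeasurable
  set X : Θ → ℝ := fun ω => P ω * Υ ω with hXdef
  have hXm : Measurable X := hPm.mul hΥm
  set νX := Measure.map X ℙ with hνXdef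
  haveI : IsProbabilityMeasure νX := Measure.isProbabilityMeasure_map hXm.aemeasurable
  -- null sets
  have hwdIic : ∀ (f : ℝ → ℝ), (∀ t ∉ Set.Ioi (0:ℝ), f t = 0) →
      (volume.withDensity fun t => ENNReal.ofReal (f t)) (Set.Iic 0) = 0 := by
    intro f hf
    rw [withDensity_apply _ measurableSet_Iic]
    rw [setLIntegral_congr_fun measurableSet_Iic (fun x (hx : x ∈ Set.Iic 0) => by
      rw [hf x (Set.notMem_Ioi.mpr hx), ENNReal.ofReal_zero] :
        ∀ x ∈ Set.Iic (0:ℝ), ENNReal.ofReal (f x) = 0)]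
    simp
  have hν₂Iic : ν₂ (Set.Iic 0) = 0 := by rw [hP]; exact hwdIic fP hfPz
  have hν₃Iic : ν₃ (Set.Iic 0) = 0 := by rw [hΥ]; exact hwdIic fΥ hfΥz
  have hP0 : ℙ (P ⁻¹' Set.Iic 0) = 0 := by
    rw [← Measure.map_apply hPm measurableSet_Iic]; exact hν₂Iic
  have hΥ0 : ℙ (Υ ⁻¹' Set.Iic 0) = 0 := by
    rw [← Measure.map_apply hΥm measurableSet_Iic]; exact hν₃Iic
  have hX0 : ℙ (X ⁻¹' Set.Iic 0) = 0 := by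
    apply measure_mono_null (t := P ⁻¹' Set.Iic 0 ∪ Υ ⁻¹' Set.Iic 0)
    · intro ω hω
      simp only [Set.mem_preimage, Set.mem_Iic, Set.mem_union] at hω ⊢
      have hXω : X ω = P ω * Υ ω := rfl
      rw [hXω] at hω
      by_contra hcon
      push_neg at hcon
      nlinarith [hcon.1, hcon.2]
    · exact measure_union_null hP0 hΥ0
  have hνXIic : νX (Set.Iic 0) = 0 := by
    rw [hνXdef, Measure.map_apply hXm measurableSet_Iic]; exact hX0
  have hnotIoi : {x : ℝ | x ∉ Set.Ioi (0:ℝ)} = Set.Iic 0 := by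
    ext x; simp [not_lt]
  have hνXae : ∀ᵐ x ∂νX, x ∈ Set.Ioi (0:ℝ) := by
    rw [ae_iff, hnotIoi]; exact hνXIic
  -- independence
  have hIndPU : IndepFun Υ P ℙ := by
    have := hindep.indepFun (show (2 : Fin 3) ≠ 1 by decide)
    simpa using this
  have hIndXγ : IndepFun X γ₁ ℙ := by
    have := hindep.indepFun_mul_left
      (fun i => by fin_cases i <;> simpa using ‹_›) 1 2 0 (by decide) (by decide)
    exact (by simpa using this : IndepFun (P * Υ) γ₁ ℙ)
  have hmap1 : Measure.map (fun ω => (X ω, γ₁ ω)) ℙ = νX.prod ν₁ :=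
    (indepFun_iff_map_prod_eq_prod_map_map hXm.aemeasurable hγ₁m.aemeasurable).mp hIndXγ
  have hmap2 : Measure.map (fun ω => (Υ ω, P ω)) ℙ = ν₃.prod ν₂ :=
    (indepFun_iff_map_prod_eq_prod_map_map hΥm.aemeasurable hPm.aemeasurable).mp hIndPU
  -- the event as a product set
  set S : Set (ℝ × ℝ) := {q | 0 < q.1 ∧ q.2 ≤ z + C*z/q.1} with hSdef
  have hSm : MeasurableSet S := by
    have h : S = {q : ℝ × ℝ | 0 < q.1} ∩ {q : ℝ × ℝ | q.2 ≤ z + C*z/q.1} := rfl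
    rw [h]
    exact (measurableSet_lt measurable_const measurable_fst).inter
      (measurableSet_le measurable_snd (by fun_prop))
  have hiff : ∀ y x : ℝ, 0 < x → (y * x / (x + C) ≤ z ↔ y ≤ z + C*z/x) := by
    intro y x hx
    have hxC : 0 < x + C := by linarith
    rw [div_le_iff₀ hxC]
    have h2 : z * (x + C) = (z + C*z/x) * x := by field_simp
    rw [h2]
    exact mul_le_mul_iff_of_pos_right hx
  have hevent : ℙ {ω | γ₁ ω * X ω / (X ω + C) ≤ z} = (νX.prod ν₁) S := by
    have hpre : (fun ω => (X ω, γ₁ ω)) ⁻¹' S = {ω | 0 < X ω ∧ γ₁ ω ≤ z + C*z/(X ω)} := rfl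
    rw [← hmap1, Measure.map_apply (hXm.prodMk hγ₁m) hSm, hpre]
    apply le_antisymm
    · calc ℙ {ω | γ₁ ω * X ω / (X ω + C) ≤ z}
          ≤ ℙ ({ω | 0 < X ω ∧ γ₁ ω ≤ z + C*z/(X ω)} ∪ X ⁻¹' Set.Iic 0) := by
            apply measure_mono
            intro ω hω
            by_cases hx : 0 < X ω
            · exact Or.inl ⟨hx, (hiff _ _ hx).mp hω⟩
            · exact Or.inr (not_lt.mp hx)
        _ ≤ ℙ {ω | 0 < X ω ∧ γ₁ ω ≤ z + C*z/(X ω)} + ℙ (X ⁻¹' Set.Iic 0) :=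
            measure_union_le _ _
        _ = ℙ {ω | 0 < X ω ∧ γ₁ ω ≤ z + C*z/(X ω)} := by rw [hX0, add_zero]
    · apply measure_mono
      intro ω hω
      exact (hiff _ _ hω.1).mpr hω.2
  have hprod : (νX.prod ν₁) S = ∫⁻ x in Set.Ioi 0, ν₁ (Set.Iic (z + C*z/x)) ∂νX := by
    rw [Measure.prod_apply hSm, ← lintegral_indicator measurableSet_Ioi]
    apply lintegral_congr
    intro x
    by_cases hx : 0 < x
    · rw [Set.indicator_of_mem (Set.mem_Ioi.mpr hx)]
      congr 1
      ext y
      simp only [Set.mem_preimage, hSdef, Set.mem_setOf_eq, Set.mem_Iic]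
      exact ⟨fun h => h.2, fun h => ⟨hx, h⟩⟩
    · rw [Set.indicator_of_notMem (by simpa using hx)]
      have h : Prod.mk x ⁻¹' S = ∅ := by
        ext y
        simp only [Set.mem_preimage, hSdef, Set.mem_setOf_eq, Set.mem_empty_iff_false,
          iff_false, not_and]
        intro h'; exact absurd h' hx
      rw [h, measure_empty]
  -- CDF formula pointwise
  set Kf : ℕ → ℝ → ℝ := fun p x => x ^ (-(p:ℝ)) * Real.exp (-(lam*C*z)/x) with hKfdef
  set Hf : ℝ → ℝ := fun x => ∑ n ∈ Finset.range m₁, (1/(n.factorial:ℝ)) *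
      ∑ p ∈ Finset.range (n+1), (n.choose p : ℝ) * (lam*z)^(n-p) * (lam*C*z)^p * Kf p x
    with hHfdef
  have hgpos : ∀ x : ℝ, 0 < x → (0:ℝ) ≤ z + C*z/x := fun x hx => by positivity
  have hEH : ∀ x : ℝ, 0 < x →
      Real.exp (-lam * (z + C*z/x)) * ∑ n ∈ Finset.range m₁, (lam*(z + C*z/x))^n / n.factorial
        = Real.exp (-lam*z) * Hf x := by
    intro x hx
    rw [hHfdef, hKfdef]
    exact expand_pt lam C z hlam hC hz m₁ x hx
  have hcdf : ∀ x : ℝ, 0 < x → ν₁ (Set.Iic (z + C*z/x))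
      = ENNReal.ofReal (1 - Real.exp (-lam*z) * Hf x) := by
    intro x hx
    rw [hγ₁, gamma_measure_Iic lam hlam m₁ hm₁ _ (hgpos x hx), hEH x hx]
  have h01 : ∀ x : ℝ, 0 < x →
      0 ≤ Real.exp (-lam*z) * Hf x ∧ Real.exp (-lam*z) * Hf x ≤ 1 := by
    intro x hx
    obtain ⟨k, hk⟩ : ∃ k, m₁ = k + 1 := ⟨m₁ - 1, (Nat.succ_pred_eq_of_pos hm₁).symm⟩
    have h1 := gamma_cdf_nonneg lam hlam k (z + C*z/x) (hgpos x hx)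
    have h2 := gamma_cdf_le_one lam hlam k (z + C*z/x) (hgpos x hx)
    rw [← hk] at h1 h2
    rw [hEH x hx] at h1 h2
    exact ⟨by linarith, by linarith⟩
  -- measurability
  have hKm : ∀ p : ℕ, Measurable (Kf p) := by
    intro p
    rw [hKfdef]
    fun_prop
  have hHm : Measurable Hf := by
    rw [hHfdef]
    apply Finset.measurable_sum
    intro n _
    apply Measurable.const_mul
    apply Finset.measurable_sum
    intro p _
    exact (hKm p).const_mul _
  -- the lintegral
  set L := ∫⁻ x in Set.Ioi (0:ℝ), ENNReal.ofReal (Real.exp (-lam*z) * Hf x) ∂νX with hLdef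
  have hLle : L ≤ 1 := by
    rw [hLdef]
    calc ∫⁻ x in Set.Ioi (0:ℝ), ENNReal.ofReal (Real.exp (-lam*z) * Hf x) ∂νX
        ≤ ∫⁻ _x in Set.Ioi (0:ℝ), 1 ∂νX := by
          apply lintegral_mono_ae
          filter_upwards [ae_restrict_mem measurableSet_Ioi] with x hx
          exact ENNReal.ofReal_le_one.mpr (h01 x hx).2
      _ = νX (Set.Ioi 0) := by rw [setLIntegral_one]
      _ ≤ 1 := prob_le_one
  have hνXIoi : νX (Set.Ioi 0) = 1 := by
    have h := measure_compl (μ := νX) (s := Set.Iic 0) measurableSet_Iic (measure_ne_top _ _)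
    rw [Set.compl_Iic] at h
    rw [h, hνXIic, measure_univ, tsub_zero]
  have hstep : ∫⁻ x in Set.Ioi 0, ν₁ (Set.Iic (z + C*z/x)) ∂νX = (1 : ENNReal) - L := by
    have hcongr : ∫⁻ x in Set.Ioi 0, ν₁ (Set.Iic (z + C*z/x)) ∂νX
        = ∫⁻ x in Set.Ioi 0,
            ((fun _ => (1:ENNReal)) x - ENNReal.ofReal (Real.exp (-lam*z) * Hf x)) ∂νX := by
      apply setLIntegral_congr_fun measurableSet_Ioi
      intro x hx
      dsimp only
      rw [hcdf x hx, ENNReal.ofReal_sub _ (h01 x hx).1, ENNReal.ofReal_one]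
    rw [hcongr]
    have hgm : Measurable fun x => ENNReal.ofReal (Real.exp (-lam*z) * Hf x) :=
      (hHm.const_mul _).ennreal_ofReal
    have hfin : ∫⁻ x in Set.Ioi (0:ℝ), ENNReal.ofReal (Real.exp (-lam*z) * Hf x) ∂νX ≠ ⊤ := by
      rw [← hLdef]
      exact (lt_of_le_of_lt hLle ENNReal.one_lt_top).ne
    have hle : (fun x => ENNReal.ofReal (Real.exp (-lam*z) * Hf x))
        ≤ᵐ[νX.restrict (Set.Ioi 0)] fun _ => (1:ENNReal) := by
      filter_upwards [ae_restrict_mem measurableSet_Ioi] with x hx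
      exact ENNReal.ofReal_le_one.mpr (h01 x hx).2
    rw [lintegral_sub hgm hfin hle, setLIntegral_one, hνXIoi, ← hLdef]
  have hPA : ℙ {ω | γ₁ ω * X ω / (X ω + C) ≤ z} = 1 - L := by
    rw [hevent, hprod, hstep]
  have htoReal : (ℙ {ω | γ₁ ω * X ω / (X ω + C) ≤ z}).toReal = 1 - L.toReal := by
    rw [hPA, ENNReal.toReal_sub_of_le hLle ENNReal.one_ne_top, ENNReal.toReal_one]
  -- convert L to a Bochner integral
  have hres : νX.restrict (Set.Ioi 0) = νX := Measure.restrict_eq_self_of_ae_mem hνXae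
  have hint_eq : ∫ x, Real.exp (-lam*z) * Hf x ∂νX = L.toReal := by
    rw [← hres, integral_eq_lintegral_of_nonneg_ae ?pos ?meas]
    case pos =>
      filter_upwards [ae_restrict_mem measurableSet_Ioi] with x hx
      exact (h01 x hx).1
    case meas => exact ((hHm.const_mul _).aestronglyMeasurable).restrict
  -- integrability of each term
  have hKint : ∀ p : ℕ, Integrable (Kf p) νX := by
    intro p
    apply Integrable.mono' (integrable_const ((p.factorial : ℝ) / (lam*C*z)^p))
      (hKm p).aestronglyMeasurable
    filter_upwards [hνXae] with x hx
    have h1 : 0 ≤ Kf p x := mul_nonneg (Real.rpow_nonneg (le_of_lt hx) _) (Real.exp_nonneg _)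
    rw [Real.norm_of_nonneg h1]
    exact kbound (lam*C*z) (by positivity) p x hx
  -- expand the integral into sums
  have hsum : ∫ x, Real.exp (-lam*z) * Hf x ∂νX
      = Real.exp (-lam*z) * ∑ n ∈ Finset.range m₁, (1/(n.factorial:ℝ)) *
          ∑ p ∈ Finset.range (n+1), (n.choose p:ℝ) * (lam*z)^(n-p) * (lam*C*z)^p *
            ∫ x, Kf p x ∂νX := by
    rw [integral_const_mul]
    congr 1
    rw [hHfdef]
    rw [integral_finset_sum _ (fun n _ => by
      apply Integrable.const_mul
      apply integrable_finset_sum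
      intro p _
      exact (hKint p).const_mul _)]
    refine Finset.sum_congr rfl fun n _ => ?_
    rw [integral_const_mul]
    congr 1
    rw [integral_finset_sum _ (fun p _ => (hKint p).const_mul _)]
    refine Finset.sum_congr rfl fun p _ => ?_
    rw [integral_const_mul]
  -- each K-integral as a double integral
  have hKp : ∀ p : ℕ, ∫ x, Kf p x ∂νX
      = ∫ u in Set.Ioi (0:ℝ), ∫ t in Set.Ioi (0:ℝ), Kf p (t*u) * fP t * fΥ u := by
    intro p
    have hφm : Measurable fun q : ℝ × ℝ => Kf p (q.2 * q.1) :=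
      (hKm p).comp (measurable_snd.mul measurable_fst)
    have h1 : ∫ x, Kf p x ∂νX = ∫ ω, Kf p (X ω) ∂ℙ := by
      rw [hνXdef, integral_map hXm.aemeasurable (hKm p).aestronglyMeasurable]
    have h2 : ∫ ω, Kf p (X ω) ∂ℙ = ∫ q : ℝ × ℝ, Kf p (q.2 * q.1) ∂(ν₃.prod ν₂) := by
      rw [← hmap2, integral_map (hΥm.prodMk hPm).aemeasurable hφm.aestronglyMeasurable]
    have haeprod : ∀ᵐ q : ℝ × ℝ ∂(ν₃.prod ν₂), 0 < q.1 ∧ 0 < q.2 := by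
      rw [ae_iff]
      apply measure_mono_null (t := (Set.Iic 0) ×ˢ (Set.univ : Set ℝ)
        ∪ (Set.univ : Set ℝ) ×ˢ (Set.Iic 0))
      · intro q hq
        simp only [Set.mem_setOf_eq, not_and_or, not_lt] at hq
        rcases hq with h | h
        · exact Or.inl ⟨h, Set.mem_univ _⟩
        · exact Or.inr ⟨Set.mem_univ _, h⟩
      · apply measure_union_null
        · rw [Measure.prod_prod, hν₃Iic, zero_mul]
        · rw [Measure.prod_prod, hν₂Iic, mul_zero]
    have hφint : Integrable (fun q : ℝ × ℝ => Kf p (q.2 * q.1)) (ν₃.prod ν₂) := by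
      apply Integrable.mono' (integrable_const ((p.factorial : ℝ)/(lam*C*z)^p))
        hφm.aestronglyMeasurable
      filter_upwards [haeprod] with q hq
      have hpos : 0 < q.2 * q.1 := mul_pos hq.2 hq.1
      have hn : 0 ≤ Kf p (q.2*q.1) :=
        mul_nonneg (Real.rpow_nonneg hpos.le _) (Real.exp_nonneg _)
      rw [Real.norm_of_nonneg hn]
      exact kbound (lam*C*z) (by positivity) p _ hpos
    have h3 : ∫ q : ℝ×ℝ, Kf p (q.2*q.1) ∂(ν₃.prod ν₂)
        = ∫ u, (∫ t, Kf p (t * u) ∂ν₂) ∂ν₃ := integral_prod _ hφint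
    have h4 : ∀ u : ℝ, ∫ t, Kf p (t*u) ∂ν₂ = ∫ t in Set.Ioi (0:ℝ), Kf p (t*u) * fP t := by
      intro u
      rw [hP]
      exact integral_withDensity_ofReal fP hfPm hfP0 hfPz _
    have h5 : ∫ u, (∫ t in Set.Ioi (0:ℝ), Kf p (t*u) * fP t) ∂ν₃
        = ∫ u in Set.Ioi (0:ℝ), (∫ t in Set.Ioi (0:ℝ), Kf p (t*u) * fP t) * fΥ u := by
      rw [hΥ]
      exact integral_withDensity_ofReal fΥ hfΥm hfΥ0 hfΥz _
    rw [h1, h2, h3]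
    simp only [h4]
    rw [h5]
    apply setIntegral_congr_fun measurableSet_Ioi
    intro u _
    exact (integral_mul_const (fΥ u) _).symm
  -- assemble
  have hgoal : {ω | γ₁ ω * (P ω * Υ ω) / (P ω * Υ ω + C) ≤ z}
      = {ω | γ₁ ω * X ω / (X ω + C) ≤ z} := rfl
  rw [hgoal, htoReal, ← hint_eq, hsum]
  simp only [hKfdef] at hKp ⊢
  simp only [hKp]
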